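/- For α > 1, define c_α = (α + 1)/((α + 1)·log₂(α + 1) − α·log₂ α). Then c_α is strictly increasing as a function of α on (1, ∞), and for all α with φ < α ≤ 2 (where φ = (1 + √5)/2 is the golden ratio), 1.042 < c_α < 1.089. -/

import Mathlib

open Real

noncomputable def cA (α : ℝ) : ℝ :=
  (α + 1) / ((α + 1) * logb 2 (α + 1) - α * logb 2 α)

lemma logb_lt_div {x : ℝ} (a b : ℕ) (hb : 0 < b) (hx : 0 < x) (h : x ^ b < 2 ^ a) :
    Real.logb 2 x < a / b := by
  have h2 : (1:ℝ) < 2 := one_lt_two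
  have := Real.logb_lt_logb h2 (pow_pos hx b) h
  rw [Real.logb_pow, Real.logb_pow, Real.logb_self_eq_one (by norm_num)] at this
  rw [lt_div_iff₀ (by exact_mod_cast hb)]
  simpa [mul_comm] using this

lemma div_lt_logb {x : ℝ} (a b : ℕ) (hb : 0 < b) (h : (2:ℝ) ^ a < x ^ b) :
    (a : ℝ) / b < Real.logb 2 x := by
  have h2 : (1:ℝ) < 2 := one_lt_two
  have := Real.logb_lt_logb h2 (by positivity) h
  rw [Real.logb_pow, Real.logb_pow, Real.logb_self_eq_one (by norm_num)] at this
  rw [div_lt_iff₀ (by exact_mod_cast hb)]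
  simpa [mul_comm] using this

lemma den_pos {x : ℝ} (hx : 1 < x) :
    0 < (x + 1) * logb 2 (x + 1) - x * logb 2 x := by
  have h0 : 0 < x := lt_trans one_pos hx
  have h1 : logb 2 x < logb 2 (x + 1) := Real.logb_lt_logb one_lt_two h0 (by linarith)
  have h2 : 0 < logb 2 x := Real.logb_pos one_lt_two hx
  nlinarith

lemma hasDerivAt_cA {x : ℝ} (hx : 1 < x) :
    HasDerivAt cA (logb 2 x / ((x + 1) * logb 2 (x + 1) - x * logb 2 x) ^ 2) x := by
  have h0 : 0 < x := lt_trans one_pos hx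
  have hl2 : Real.log 2 ≠ 0 := by
    have := Real.log_pos one_lt_two; linarith
  -- derivative of numerator
  have hnum : HasDerivAt (fun y : ℝ => y + 1) 1 x := (hasDerivAt_id x).add_const 1
  -- derivative of (y+1) * logb 2 (y+1)
  have hA : HasDerivAt (fun y : ℝ => (y + 1) * logb 2 (y + 1))
      (logb 2 (x + 1) + 1 / Real.log 2) x := by
    have hlog : HasDerivAt (fun y : ℝ => Real.log (y + 1)) (1 / (x + 1)) x := by
      simpa using (HasDerivAt.log hnum (by linarith))
    have : HasDerivAt (fun y : ℝ => (y + 1) * (Real.log (y + 1) / Real.log 2))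
        (1 * (Real.log (x + 1) / Real.log 2) + (x + 1) * (1 / (x + 1) / Real.log 2)) x :=
      hnum.mul (hlog.div_const _)
    simp only [Real.logb]
    convert this using 1
    field_simp
  have hB : HasDerivAt (fun y : ℝ => y * logb 2 y)
      (logb 2 x + 1 / Real.log 2) x := by
    have hlog : HasDerivAt Real.log (1 / x) x := by
      simpa [one_div] using Real.hasDerivAt_log (ne_of_gt h0)
    have : HasDerivAt (fun y : ℝ => y * (Real.log y / Real.log 2))
        (1 * (Real.log x / Real.log 2) + x * (1 / x / Real.log 2)) x :=
      (hasDerivAt_id x).mul (hlog.div_const _)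
    simp only [Real.logb]
    convert this using 1
    field_simp
  have hden : HasDerivAt (fun y : ℝ => (y + 1) * logb 2 (y + 1) - y * logb 2 y)
      (logb 2 (x + 1) - logb 2 x) x := by
    have := hA.sub hB
    exact this.congr_deriv (by ring)
  have hdpos := den_pos hx
  have h := hnum.div hden (ne_of_gt hdpos)
  have : (1 * ((x + 1) * logb 2 (x + 1) - x * logb 2 x) -
      (x + 1) * (logb 2 (x + 1) - logb 2 x)) = logb 2 x := by ring
  rw [this] at h
  exact h

lemma cA_strictMono : StrictMonoOn cA (Set.Ioi (1 : ℝ)) := by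
  apply strictMonoOn_of_deriv_pos (convex_Ioi 1)
  · intro x hx
    exact (hasDerivAt_cA hx).differentiableAt.continuousAt.continuousWithinAt
  · intro x hx
    rw [interior_Ioi] at hx
    rw [(hasDerivAt_cA hx).deriv]
    have h1 : 0 < logb 2 x := Real.logb_pos one_lt_two hx
    have h2 := den_pos hx
    positivity

theorem cA_strictMono_and_bounds :
    StrictMonoOn cA (Set.Ioi (1 : ℝ)) ∧
    ∀ α : ℝ, (1 + Real.sqrt 5) / 2 < α → α ≤ 2 →
      1.042 < cA α ∧ cA α < 1.089 := by
  have hmono := cA_strictMono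
  refine ⟨hmono, fun α hφ h2 => ?_⟩
  have hs5 : (2.234 : ℝ) < Real.sqrt 5 := by
    rw [show (2.234:ℝ) = Real.sqrt (2.234^2) by rw [Real.sqrt_sq]; norm_num]
    apply Real.sqrt_lt_sqrt <;> norm_num
  have hφ1 : (1.617 : ℝ) < (1 + Real.sqrt 5) / 2 := by linarith
  have hα1 : (1:ℝ) < α := by linarith
  constructor
  · -- lower bound: cA 1.617 < cA α
    have hlt : cA (1.617 : ℝ) < cA α := by
      apply hmono (by norm_num : (1.617:ℝ) ∈ Set.Ioi 1) hα1 (by linarith)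
    have hval : (1.042 : ℝ) < cA (1.617 : ℝ) := by
      have hL1 : logb 2 (2.617 : ℝ) < 161 / 116 := by
        apply logb_lt_div 161 116 (by norm_num) (by norm_num)
        norm_num
      have hL2 : (61 : ℝ) / 88 < logb 2 (1.617 : ℝ) := by
        apply div_lt_logb 61 88 (by norm_num)
        norm_num
      have hden : 0 < ((1.617:ℝ) + 1) * logb 2 ((1.617:ℝ) + 1) - 1.617 * logb 2 1.617 :=
        den_pos (by norm_num)
      simp only [cA] at hden ⊢; rw [show (1.617:ℝ) + 1 = 2.617 by norm_num] at hden ⊢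
      rw [lt_div_iff₀ hden]
      nlinarith
    linarith
  · -- upper bound
    have hle : cA α ≤ cA 2 := by
      rcases eq_or_lt_of_le h2 with h | h
      · rw [h]
      · exact le_of_lt (hmono (Set.mem_Ioi.mpr hα1) (by norm_num) h)
    have hval : cA 2 < (1.089 : ℝ) := by
      have hL3 : (1054 : ℝ) / 665 < logb 2 (3 : ℝ) := by
        apply div_lt_logb 1054 665 (by norm_num)
        exact_mod_cast (by decide +kernel : (2:ℕ) ^ 1054 < 3 ^ 665)
      have hden : 0 < ((2:ℝ) + 1) * logb 2 ((2:ℝ) + 1) - 2 * logb 2 2 :=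
        den_pos (by norm_num)
      simp only [cA] at hden ⊢
      rw [div_lt_iff₀ hden]
      have hl22 : logb 2 (2:ℝ) = 1 := Real.logb_self_eq_one (by norm_num)
      rw [show (2:ℝ)+1 = 3 by norm_num] at *
      rw [hl22] at *
      nlinarith
    linarith
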